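/- Let f: ℝ^{d₁} × ℝ^{d₂} → ℝ be twice continuously differentiable and let (x*,y*) be a stationary point of f (i.e., ∇f(x*,y*) = 0). If ∇²_{yy} f(x*,y*) is negative definite and the Schur complement [∇²_{xx} f − ∇²_{xy} f (∇²_{yy} f)^{-1} ∇²_{yx} f](x*,y*) is positive definite, then (x*,y*) is a local minimax point of f. -/

import Mathlib

open Metric Filter Set Matrix

noncomputable section
section Aux
variable {E F E' : Type*} [NormedAddCommGroup E] [NormedSpace ℝ E]
  [NormedAddCommGroup F] [NormedSpace ℝ F] [NormedAddCommGroup E'] [NormedSpace ℝ E']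

theorem fd_affine (G : F → ℝ) (hG : ContDiff ℝ 2 G) (A : E →L[ℝ] F) (c : F) (x₀ : E) :
    fderiv ℝ (fun x => G (A x + c)) x₀ = (fderiv ℝ G (A x₀ + c)).comp A :=
  (((hG.differentiable (by norm_num)) (A x₀ + c)).hasFDerivAt.comp x₀
    ((A.hasFDerivAt).add_const c)).fderiv

theorem fd_outer (G : F → ℝ) (hG : ContDiff ℝ 2 G) (A : E →L[ℝ] F) (J : E' →L[ℝ] F) (c : F)
    (x₀ : E) (v : E) (w : E') :
    fderiv ℝ (fun x => (fderiv ℝ G (A x + c)).comp J) x₀ v w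
      = fderiv ℝ (fderiv ℝ G) (A x₀ + c) (A v) (J w) := by
  have h1 : ContDiff ℝ 1 (fderiv ℝ G) := hG.fderiv_right (by norm_num)
  have haff : HasFDerivAt (fun x : E => A x + c) A x₀ := (A.hasFDerivAt).add_const c
  have hmid : HasFDerivAt (fderiv ℝ G) (fderiv ℝ (fderiv ℝ G) (A x₀ + c)) (A x₀ + c) :=
    ((h1.differentiable (by norm_num)) _).hasFDerivAt
  have key : HasFDerivAt (fun x => (fderiv ℝ G (A x + c)).comp J)
      ((((ContinuousLinearMap.compL ℝ E' F ℝ).flip J)).comp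
        ((fderiv ℝ (fderiv ℝ G) (A x₀ + c)).comp A)) x₀ :=
    (((ContinuousLinearMap.compL ℝ E' F ℝ).flip J).hasFDerivAt).comp x₀ (hmid.comp x₀ haff)
  rw [key.fderiv]
  simp

theorem snd_affine (G : F → ℝ) (hG : ContDiff ℝ 2 G) (A : E →L[ℝ] F) (c : F) (x₀ v w : E) :
    fderiv ℝ (fderiv ℝ (fun x => G (A x + c))) x₀ v w
      = fderiv ℝ (fderiv ℝ G) (A x₀ + c) (A v) (A w) := by
  have h : fderiv ℝ (fun x => G (A x + c)) = fun x => (fderiv ℝ G (A x + c)).comp A :=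
    funext fun x => fd_affine G hG A c x
  rw [h]
  exact fd_outer G hG A A c x₀ v w

theorem mixed_partial (G : F → ℝ) (hG : ContDiff ℝ 2 G) (A : E →L[ℝ] F) (B' : E' →L[ℝ] F)
    (c : F) (x₀ : E) (z₀ : E') (v : E) (w : E') :
    fderiv ℝ (fun x => fderiv ℝ (fun z => G (A x + B' z + c)) z₀) x₀ v w
      = fderiv ℝ (fderiv ℝ G) (A x₀ + B' z₀ + c) (A v) (B' w) := by
  have h1 : (fun x => fderiv ℝ (fun z => G (A x + B' z + c)) z₀)
      = fun x => (fderiv ℝ G (A x + (B' z₀ + c))).comp B' := by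
    funext x
    have h2 : (fun z => G (A x + B' z + c)) = fun z => G (B' z + (A x + c)) := by
      funext z
      congr 1
      abel
    rw [h2, fd_affine G hG B' (A x + c) z₀]
    congr 2
    abel
  rw [h1]
  have h3 := fd_outer G hG A B' (B' z₀ + c) x₀ v w
  rw [h3]
  congr 2
  abel

end Aux
noncomputable section

theorem euclid_decomp {n : ℕ} (v : EuclideanSpace ℝ (Fin n)) :
    v = ∑ i, v i • EuclideanSpace.single i (1:ℝ) := by
  ext j
  have h : (∑ i, v i • EuclideanSpace.single i (1:ℝ)) j
      = ∑ i, (v i • EuclideanSpace.single i (1:ℝ)) j := by rw [WithLp.ofLp_sum]; exact Finset.sum_apply j Finset.univ _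
  rw [h]
  simp [EuclideanSpace.single_apply]

theorem clm_expand {n : ℕ} {F : Type*} [NormedAddCommGroup F] [NormedSpace ℝ F]
    (T : EuclideanSpace ℝ (Fin n) →L[ℝ] F) (v : EuclideanSpace ℝ (Fin n)) :
    T v = ∑ i, v i • T (EuclideanSpace.single i 1) := by
  conv_lhs => rw [euclid_decomp v]
  rw [map_sum]
  simp

theorem blockdot {n m : ℕ} (T : EuclideanSpace ℝ (Fin n) →L[ℝ] (EuclideanSpace ℝ (Fin m) →L[ℝ] ℝ))
    (M : Matrix (Fin n) (Fin m) ℝ)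
    (hM : ∀ i j, T (EuclideanSpace.single i 1) (EuclideanSpace.single j 1) = M i j)
    (v : EuclideanSpace ℝ (Fin n)) (w : EuclideanSpace ℝ (Fin m)) :
    T v w = v ⬝ᵥ M.mulVec w := by
  rw [clm_expand T v, ContinuousLinearMap.sum_apply]
  simp only [ContinuousLinearMap.smul_apply, smul_eq_mul]
  unfold dotProduct Matrix.mulVec
  refine Finset.sum_congr rfl fun i _ => ?_
  rw [clm_expand (T (EuclideanSpace.single i 1)) w]
  simp only [smul_eq_mul, hM, Finset.mul_sum]
  unfold dotProduct
  rw [Finset.mul_sum]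
  exact Finset.sum_congr rfl fun j _ => by ring
noncomputable section

set_option maxHeartbeats 1000000 in
theorem my_localMin {n : ℕ} (g : EuclideanSpace ℝ (Fin n) → ℝ) (hg : ContDiff ℝ 2 g)
    (a : EuclideanSpace ℝ (Fin n)) (h1 : fderiv ℝ g a = 0)
    (h2 : ∀ v, v ≠ 0 → 0 < fderiv ℝ (fderiv ℝ g) a v v) :
    ∃ r > (0:ℝ), ∀ x, ‖x - a‖ ≤ r → g a ≤ g x := by
  set H := fderiv ℝ (fderiv ℝ g) with hHdef
  have hC1 : ContDiff ℝ 1 (fderiv ℝ g) := hg.fderiv_right (by norm_num)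
  have hHc : Continuous H := hC1.continuous_fderiv (by norm_num)
  -- coercivity constant
  obtain ⟨c, hc0, hc⟩ : ∃ c > (0:ℝ), ∀ v, c * ‖v‖ ^ 2 ≤ H a v v := by
    by_cases hne : (sphere (0 : EuclideanSpace ℝ (Fin n)) 1).Nonempty
    · have hcont : Continuous fun v : EuclideanSpace ℝ (Fin n) => H a v v :=
        ((H a).continuous.clm_apply continuous_id)
      obtain ⟨u, hu, hmin⟩ := (isCompact_sphere (0 : EuclideanSpace ℝ (Fin n)) 1).exists_isMinOn
        hne hcont.continuousOn
      have hu1 : ‖u‖ = 1 := by simpa using mem_sphere_zero_iff_norm.mp hu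
      have hune : u ≠ 0 := by
        intro h; rw [h] at hu1; simp at hu1
      refine ⟨H a u u, h2 u hune, fun v => ?_⟩
      rcases eq_or_ne v 0 with rfl | hv
      · simp
      · set u' : EuclideanSpace ℝ (Fin n) := ‖v‖⁻¹ • v with hu'
        have hvn : ‖v‖ ≠ 0 := norm_ne_zero_iff.mpr hv
        have hu'mem : u' ∈ sphere (0 : EuclideanSpace ℝ (Fin n)) 1 := by
          rw [mem_sphere_zero_iff_norm, hu', norm_smul]
          simp [abs_of_nonneg, inv_mul_cancel₀ hvn]
        have hvv : v = ‖v‖ • u' := by rw [hu', smul_inv_smul₀ hvn]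
        have hexp : H a v v = ‖v‖ ^ 2 * H a u' u' := by
          conv_lhs => rw [hvv]
          simp only [ContinuousLinearMap.map_smul, ContinuousLinearMap.smul_apply,
            smul_eq_mul]
          ring
        have := hmin hu'mem
        rw [hexp]
        calc H a u u * ‖v‖ ^ 2 ≤ H a u' u' * ‖v‖ ^ 2 := by
              apply mul_le_mul_of_nonneg_right this (by positivity)
          _ = ‖v‖ ^ 2 * H a u' u' := by ring
    · refine ⟨1, one_pos, fun v => ?_⟩
      have hv0 : v = 0 := by
        by_contra hv
        exact hne ⟨‖v‖⁻¹ • v, by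
          rw [mem_sphere_zero_iff_norm, norm_smul]
          simp [inv_mul_cancel₀ (norm_ne_zero_iff.mpr hv)]⟩
      simp [hv0]
  -- radius where Hessian stays close
  obtain ⟨r, hr0, hrH⟩ : ∃ r > (0:ℝ), ∀ x, ‖x - a‖ ≤ r → ‖H x - H a‖ ≤ c / 2 := by
    obtain ⟨δ, hδ0, hδ⟩ := (Metric.continuousAt_iff (f := H) (a := a)).mp hHc.continuousAt (c / 2) (by positivity)
    refine ⟨δ / 2, by positivity, fun x hx => ?_⟩
    have : dist x a < δ := by rw [dist_eq_norm]; linarith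
    have := hδ this
    rw [← dist_eq_norm (H x) (H a)]
    exact this.le
  refine ⟨r, hr0, fun x hx => ?_⟩
  set v := x - a with hvdef
  -- points on the segment are within the ball
  have hpt : ∀ t ∈ Icc (0:ℝ) 1, ‖(a + t • v) - a‖ ≤ r := by
    intro t ht
    rw [add_sub_cancel_left, norm_smul, Real.norm_eq_abs, abs_of_nonneg ht.1]
    calc t * ‖v‖ ≤ 1 * ‖v‖ := mul_le_mul_of_nonneg_right ht.2 (norm_nonneg _)
      _ = ‖v‖ := one_mul _
      _ ≤ r := hx
  -- second directional derivative is nonneg on the segment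
  have hQ : ∀ t ∈ Icc (0:ℝ) 1, 0 ≤ H (a + t • v) v v := by
    intro t ht
    have hb : |H (a + t • v) v v - H a v v| ≤ ‖H (a + t • v) - H a‖ * ‖v‖ ^ 2 := by
      have e1 : H (a + t • v) v v - H a v v = ((H (a + t • v) - H a) v) v := by
        simp [ContinuousLinearMap.sub_apply]
      rw [e1, ← Real.norm_eq_abs]
      calc ‖((H (a + t • v) - H a) v) v‖ ≤ ‖(H (a + t • v) - H a) v‖ * ‖v‖ :=
            ContinuousLinearMap.le_opNorm _ _
        _ ≤ (‖H (a + t • v) - H a‖ * ‖v‖) * ‖v‖ :=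
            mul_le_mul_of_nonneg_right (ContinuousLinearMap.le_opNorm _ _) (norm_nonneg _)
        _ = ‖H (a + t • v) - H a‖ * ‖v‖ ^ 2 := by ring
    have hnear := hrH _ (hpt t ht)
    have h1' := hc v
    have : ‖H (a + t • v) - H a‖ * ‖v‖ ^ 2 ≤ (c/2) * ‖v‖ ^ 2 :=
      mul_le_mul_of_nonneg_right hnear (by positivity)
    have habs := abs_le.mp hb
    nlinarith [sq_nonneg ‖v‖]
  -- 1-d functions
  set ψ : ℝ → ℝ := fun t => g (a + t • v) with hψdef
  set ψ' : ℝ → ℝ := fun t => fderiv ℝ g (a + t • v) v with hψ'def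
  have hline : ∀ t : ℝ, HasDerivAt (fun s : ℝ => a + s • v) v t := by
    intro t
    simpa using ((hasDerivAt_id t).smul_const v).const_add a
  have hψd : ∀ t, HasDerivAt ψ (ψ' t) t := by
    intro t
    exact ((hg.differentiable (by norm_num) _).hasFDerivAt.comp_hasDerivAt t (hline t))
  have hψ'd : ∀ t, HasDerivAt ψ' (H (a + t • v) v v) t := by
    intro t
    have hin : HasDerivAt (fun s : ℝ => fderiv ℝ g (a + s • v)) (H (a + t • v) v) t :=
      ((hC1.differentiable (by norm_num) _).hasFDerivAt.comp_hasDerivAt t (hline t))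
    have hcd := hin.clm_apply (hasDerivAt_const t v)
    simpa using hcd
  have hψ'0 : ψ' 0 = 0 := by simp [hψ'def, h1]
  -- ψ' is monotone on [0,1]
  have hmono' : MonotoneOn ψ' (Icc 0 1) := by
    apply monotoneOn_of_deriv_nonneg (convex_Icc 0 1)
    · exact fun t _ => ((hψ'd t).continuousAt).continuousWithinAt
    · intro t ht
      exact ((hψ'd t).differentiableAt).differentiableWithinAt
    · intro t ht
      rw [interior_Icc] at ht
      rw [(hψ'd t).deriv]
      exact hQ t ⟨le_of_lt ht.1, le_of_lt ht.2⟩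
  have hψ'nonneg : ∀ t ∈ Icc (0:ℝ) 1, 0 ≤ ψ' t := by
    intro t ht
    calc (0:ℝ) = ψ' 0 := hψ'0.symm
      _ ≤ ψ' t := hmono' ⟨le_refl 0, zero_le_one⟩ ht ht.1
  have hmono : MonotoneOn ψ (Icc 0 1) := by
    apply monotoneOn_of_deriv_nonneg (convex_Icc 0 1)
    · exact fun t _ => ((hψd t).continuousAt).continuousWithinAt
    · intro t ht
      exact ((hψd t).differentiableAt).differentiableWithinAt
    · intro t ht
      rw [interior_Icc] at ht
      rw [(hψd t).deriv]
      exact hψ'nonneg t ⟨le_of_lt ht.1, le_of_lt ht.2⟩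
  have := hmono (left_mem_Icc.mpr zero_le_one) (right_mem_Icc.mpr zero_le_one) zero_le_one
  simpa [hψdef, hvdef] using this

set_option maxHeartbeats 1000000 in
theorem my_localMax {n : ℕ} (g : EuclideanSpace ℝ (Fin n) → ℝ) (hg : ContDiff ℝ 2 g)
    (a : EuclideanSpace ℝ (Fin n)) (h1 : fderiv ℝ g a = 0)
    (h2 : ∀ v, v ≠ 0 → fderiv ℝ (fderiv ℝ g) a v v < 0) :
    ∃ r > (0:ℝ), ∀ x, ‖x - a‖ ≤ r → g x ≤ g a := by
  have hneg : ContDiff ℝ 2 (fun y => -(g y)) := hg.neg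
  have hfd : fderiv ℝ (fun y => -(g y)) a = 0 := by rw [fderiv_fun_neg, h1]; simp
  have hsnd : ∀ v, v ≠ 0 → 0 < fderiv ℝ (fderiv ℝ (fun y => -(g y))) a v v := by
    intro v hv
    have he : fderiv ℝ (fun y => -(g y)) = fun y => -(fderiv ℝ g y) :=
      funext fun y => fderiv_fun_neg
    rw [he]
    have he2 : fderiv ℝ (fun y => -(fderiv ℝ g y)) a = -(fderiv ℝ (fderiv ℝ g) a) := fderiv_fun_neg
    rw [he2]
    simp only [ContinuousLinearMap.neg_apply, Left.nonneg_neg_iff]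
    have := h2 v hv
    linarith [h2 v hv]
  obtain ⟨r, hr, hmin⟩ := my_localMin _ hneg a hfd hsnd
  refine ⟨r, hr, fun x hx => ?_⟩
  have := hmin x hx
  simpa using this



/-- `(xs, ys)` is a local minimax point of `f`. -/
def IsLocalMinimax {d₁ d₂ : ℕ}
    (f : EuclideanSpace ℝ (Fin d₁) → EuclideanSpace ℝ (Fin d₂) → ℝ)
    (xs : EuclideanSpace ℝ (Fin d₁)) (ys : EuclideanSpace ℝ (Fin d₂)) : Prop :=
  ∃ δ₀ > (0 : ℝ), ∃ h : ℝ → ℝ,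
    (∀ δ ∈ Set.Ioc (0 : ℝ) δ₀, 0 ≤ h δ) ∧
    Tendsto h (nhdsWithin 0 (Set.Ioi 0)) (nhds 0) ∧
    ∀ δ ∈ Set.Ioc (0 : ℝ) δ₀, ∀ x y,
      ‖x - xs‖ ≤ δ → ‖y - ys‖ ≤ δ →
        f xs y ≤ f xs ys ∧ f xs ys ≤ sSup (f x '' closedBall ys (h δ))

/-- The partial Hessian matrix `∇²_{xx} f (xs, ys)`. -/
def hessXX {d₁ d₂ : ℕ}
    (f : EuclideanSpace ℝ (Fin d₁) → EuclideanSpace ℝ (Fin d₂) → ℝ)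
    (xs : EuclideanSpace ℝ (Fin d₁)) (ys : EuclideanSpace ℝ (Fin d₂)) :
    Matrix (Fin d₁) (Fin d₁) ℝ :=
  Matrix.of fun i j =>
    fderiv ℝ (fun x => fderiv ℝ (fun x' => f x' ys) x) xs
      (EuclideanSpace.single i 1) (EuclideanSpace.single j 1)

/-- The partial Hessian matrix `∇²_{yy} f (xs, ys)`. -/
def hessYY {d₁ d₂ : ℕ}
    (f : EuclideanSpace ℝ (Fin d₁) → EuclideanSpace ℝ (Fin d₂) → ℝ)
    (xs : EuclideanSpace ℝ (Fin d₁)) (ys : EuclideanSpace ℝ (Fin d₂)) :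
    Matrix (Fin d₂) (Fin d₂) ℝ :=
  Matrix.of fun i j =>
    fderiv ℝ (fun y => fderiv ℝ (f xs) y) ys
      (EuclideanSpace.single i 1) (EuclideanSpace.single j 1)

/-- The mixed partial Hessian matrix `∇²_{xy} f (xs, ys)` (so that
`∇²_{yx} f = (∇²_{xy} f)ᵀ`). -/
def hessXY {d₁ d₂ : ℕ}
    (f : EuclideanSpace ℝ (Fin d₁) → EuclideanSpace ℝ (Fin d₂) → ℝ)
    (xs : EuclideanSpace ℝ (Fin d₁)) (ys : EuclideanSpace ℝ (Fin d₂)) :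
    Matrix (Fin d₁) (Fin d₂) ℝ :=
  Matrix.of fun i j =>
    fderiv ℝ (fun x => fderiv ℝ (f x) ys) xs
      (EuclideanSpace.single i 1) (EuclideanSpace.single j 1)

set_option maxHeartbeats 2000000 in
/-- Second-order sufficient condition for local minimax points: a stationary
point of a twice continuously differentiable `f` at which `∇²_{yy} f` is
negative definite and the Schur complement
`∇²_{xx} f - ∇²_{xy} f (∇²_{yy} f)⁻¹ ∇²_{yx} f` is positive definite is a
local minimax point. -/
theorem stmt_9 {d₁ d₂ : ℕ}
    (f : EuclideanSpace ℝ (Fin d₁) → EuclideanSpace ℝ (Fin d₂) → ℝ)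
    (hf : ContDiff ℝ 2
      (fun p : EuclideanSpace ℝ (Fin d₁) × EuclideanSpace ℝ (Fin d₂) => f p.1 p.2))
    (xs : EuclideanSpace ℝ (Fin d₁)) (ys : EuclideanSpace ℝ (Fin d₂))
    (hstat : fderiv ℝ
      (fun p : EuclideanSpace ℝ (Fin d₁) × EuclideanSpace ℝ (Fin d₂) => f p.1 p.2)
      (xs, ys) = 0)
    (hyy : (-(hessYY f xs ys)).PosDef)
    (hschur : (hessXX f xs ys -
      hessXY f xs ys * (hessYY f xs ys)⁻¹ * (hessXY f xs ys)ᵀ).PosDef) :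
    IsLocalMinimax f xs ys := by
  set F : EuclideanSpace ℝ (Fin d₁) × EuclideanSpace ℝ (Fin d₂) → ℝ :=
    (fun p => f p.1 p.2) with hF
  set Hxx := hessXX f xs ys with hHxx
  set Hyy := hessYY f xs ys with hHyy
  set Hxy := hessXY f xs ys with hHxy
  set inl₁ : EuclideanSpace ℝ (Fin d₁) →L[ℝ]
      EuclideanSpace ℝ (Fin d₁) × EuclideanSpace ℝ (Fin d₂) :=
    ContinuousLinearMap.inl ℝ _ _ with hinl
  set inr₂ : EuclideanSpace ℝ (Fin d₂) →L[ℝ]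
      EuclideanSpace ℝ (Fin d₁) × EuclideanSpace ℝ (Fin d₂) :=
    ContinuousLinearMap.inr ℝ _ _ with hinr
  set B := fderiv ℝ (fderiv ℝ F) (xs, ys) with hB
  have hFd : fderiv ℝ F (xs, ys) = 0 := hstat
  -- representation of f xs
  have hrepr : f xs = fun y => F (inr₂ y + ((xs, 0) : EuclideanSpace ℝ (Fin d₁) × EuclideanSpace ℝ (Fin d₂))) := by
    funext y
    simp [hF, hinr]
  have hpt : inr₂ ys + ((xs, (0 : EuclideanSpace ℝ (Fin d₂)))) = (xs, ys) := by
    simp [hinr, Prod.ext_iff]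
  have hgstat : fderiv ℝ (f xs) ys = 0 := by
    rw [hrepr, fd_affine F hf inr₂ (xs, 0) ys, hpt, hFd, ContinuousLinearMap.zero_comp]
  have hg2 : ContDiff ℝ 2 (f xs) := by
    rw [hrepr]
    exact hf.comp ((inr₂.contDiff).add contDiff_const)
  -- entries of hessYY as second derivative of f xs
  have hYYent : ∀ i j, fderiv ℝ (fderiv ℝ (f xs)) ys (EuclideanSpace.single i 1)
      (EuclideanSpace.single j 1) = Hyy i j := fun i j => rfl
  have hTyy : ∀ v w : EuclideanSpace ℝ (Fin d₂),
      fderiv ℝ (fderiv ℝ (f xs)) ys v w = v ⬝ᵥ Hyy *ᵥ w :=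
    blockdot _ Hyy hYYent
  have hQneg : ∀ v : EuclideanSpace ℝ (Fin d₂), v ≠ 0 →
      fderiv ℝ (fderiv ℝ (f xs)) ys v v < 0 := by
    intro v hv
    rw [hTyy v v]
    have := hyy.dotProduct_mulVec_pos (x := WithLp.ofLp v) (by simpa using hv)
    rw [Matrix.neg_mulVec, dotProduct_neg] at this
    simp only [star_trivial] at this
    linarith
  obtain ⟨r₁, hr₁, hmax⟩ := my_localMax (f xs) hg2 ys hgstat hQneg
  -- symmetry of B
  have hsym : ∀ p q, B p q = B q p := by
    intro p q
    refine second_derivative_symmetric (f := F) (f' := fderiv ℝ F) (x := (xs, ys))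
      (fun y => ((hf.differentiable (by norm_num)) y).hasFDerivAt) ?_ p q
    exact (((hf.fderiv_right (m := 1) (by norm_num)).differentiable (by norm_num)) (xs, ys)).hasFDerivAt
  -- hessXX entries
  have hreprX : (fun x' => f x' ys) = fun x' => F (inl₁ x' +
      (((0 : EuclideanSpace ℝ (Fin d₁)), ys))) := by
    funext x'
    simp [hF, hinl]
  have hptX : inl₁ xs + (((0 : EuclideanSpace ℝ (Fin d₁)), ys)) = (xs, ys) := by
    simp [hinl, Prod.ext_iff]
  have hXXent : ∀ i j, B (inl₁ (EuclideanSpace.single i 1)) (inl₁ (EuclideanSpace.single j 1))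
      = Hxx i j := by
    intro i j
    have h1 : Hxx i j = fderiv ℝ (fderiv ℝ (fun x' => f x' ys)) xs
        (EuclideanSpace.single i 1) (EuclideanSpace.single j 1) := rfl
    rw [h1, hreprX, snd_affine F hf inl₁ _ xs _ _, hptX]
  -- hessXY entries
  have hreprXY : (fun x => fderiv ℝ (f x) ys) = fun x => fderiv ℝ
      (fun z => F (inl₁ x + inr₂ z + 0)) ys := by
    funext x
    congr 1
    funext z
    simp [hF, hinl, hinr]
  have hptXY : inl₁ xs + inr₂ ys + 0 = ((xs, ys) :
      EuclideanSpace ℝ (Fin d₁) × EuclideanSpace ℝ (Fin d₂)) := by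
    simp [hinl, hinr, Prod.ext_iff]
  have hXYent : ∀ i j, B (inl₁ (EuclideanSpace.single i 1)) (inr₂ (EuclideanSpace.single j 1))
      = Hxy i j := by
    intro i j
    have h1 : Hxy i j = fderiv ℝ (fun x => fderiv ℝ (f x) ys) xs
        (EuclideanSpace.single i 1) (EuclideanSpace.single j 1) := rfl
    rw [h1, hreprXY, mixed_partial F hf inl₁ inr₂ 0 xs ys _ _, hptXY]
  -- hessYY entries for B
  have hYYentB : ∀ i j, B (inr₂ (EuclideanSpace.single i 1)) (inr₂ (EuclideanSpace.single j 1))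
      = Hyy i j := by
    intro i j
    have h1 : Hyy i j = fderiv ℝ (fderiv ℝ (f xs)) ys
        (EuclideanSpace.single i 1) (EuclideanSpace.single j 1) := rfl
    rw [h1, hrepr, snd_affine F hf inr₂ _ ys _ _, hpt]
  -- bilinear blocks as dot products
  have hbXX : ∀ v w, B (inl₁ v) (inl₁ w) = v ⬝ᵥ Hxx *ᵥ w := by
    intro v w
    exact blockdot (((ContinuousLinearMap.compL ℝ (EuclideanSpace ℝ (Fin d₁))
        (EuclideanSpace ℝ (Fin d₁) × EuclideanSpace ℝ (Fin d₂)) ℝ).flip inl₁).comp (B.comp inl₁))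
      Hxx (fun i j => hXXent i j) v w
  have hbXY : ∀ v w, B (inl₁ v) (inr₂ w) = v ⬝ᵥ Hxy *ᵥ w := by
    intro v w
    exact blockdot (((ContinuousLinearMap.compL ℝ (EuclideanSpace ℝ (Fin d₂))
        (EuclideanSpace ℝ (Fin d₁) × EuclideanSpace ℝ (Fin d₂)) ℝ).flip inr₂).comp (B.comp inl₁))
      Hxy (fun i j => hXYent i j) v w
  have hbYY : ∀ v w, B (inr₂ v) (inr₂ w) = v ⬝ᵥ Hyy *ᵥ w := by
    intro v w
    exact blockdot (((ContinuousLinearMap.compL ℝ (EuclideanSpace ℝ (Fin d₂))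
        (EuclideanSpace ℝ (Fin d₁) × EuclideanSpace ℝ (Fin d₂)) ℝ).flip inr₂).comp (B.comp inr₂))
      Hyy (fun i j => hYYentB i j) v w
  -- Hyy is invertible
  have hdet : IsUnit Hyy.det := by
    have hpos := hyy.det_pos
    rw [Matrix.det_neg] at hpos
    refine isUnit_iff_ne_zero.mpr fun h0 => ?_
    rw [h0, mul_zero] at hpos
    exact lt_irrefl 0 hpos
  -- the linear map L = -(Hyy⁻¹ Hxyᵀ)
  set Lc := LinearMap.toContinuousLinearMap
    (Matrix.toEuclideanLin (-(Hyy⁻¹ * Hxyᵀ))) with hLcdef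
  have hLc : ∀ v, (Lc v : Fin d₂ → ℝ) = (-(Hyy⁻¹ * Hxyᵀ)) *ᵥ v := fun v => rfl
  set Aφ : EuclideanSpace ℝ (Fin d₁) →L[ℝ]
      EuclideanSpace ℝ (Fin d₁) × EuclideanSpace ℝ (Fin d₂) :=
    (ContinuousLinearMap.id ℝ _).prod Lc with hAφ
  set cφ : EuclideanSpace ℝ (Fin d₁) × EuclideanSpace ℝ (Fin d₂) :=
    ((xs, ys) : _) - Aφ xs with hcφ
  have hptφ : Aφ xs + cφ = (xs, ys) := by rw [hcφ]; abel
  have hφ2 : ContDiff ℝ 2 (fun x => F (Aφ x + cφ)) := hf.comp ((Aφ.contDiff).add contDiff_const)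
  have hφstat : fderiv ℝ (fun x => F (Aφ x + cφ)) xs = 0 := by
    rw [fd_affine F hf Aφ cφ xs, hptφ, hFd, ContinuousLinearMap.zero_comp]
  have hAv : ∀ v, Aφ v = inl₁ v + inr₂ (Lc v) := by
    intro v
    simp [hAφ, hinl, hinr, Prod.ext_iff]
  have hφQ : ∀ v, v ≠ 0 → 0 < fderiv ℝ (fderiv ℝ (fun x => F (Aφ x + cφ))) xs v v := by
    intro v hv
    rw [snd_affine F hf Aφ cφ xs v v, hptφ, hAv v]
    simp only [map_add, ContinuousLinearMap.add_apply]
    rw [hbXX, hbXY, hsym (inr₂ (Lc v)) (inl₁ v), hbXY, hbYY]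
    have h5 : Hyy *ᵥ ((Lc v) : Fin d₂ → ℝ) = -(Hxyᵀ *ᵥ v) := by
      rw [hLc v, Matrix.neg_mulVec, Matrix.mulVec_neg, Matrix.mulVec_mulVec, ← Matrix.mul_assoc,
        Matrix.mul_nonsing_inv _ hdet, Matrix.one_mul]
    have h4 : (Lc v) ⬝ᵥ Hyy *ᵥ (Lc v) = -(v ⬝ᵥ Hxy *ᵥ (Lc v)) := by
      rw [h5, dotProduct_neg, Matrix.dotProduct_mulVec, Matrix.vecMul_transpose,
        dotProduct_comm]
    have h6 : v ⬝ᵥ Hxy *ᵥ ((Lc v) : Fin d₂ → ℝ) = -(v ⬝ᵥ (Hxy * Hyy⁻¹ * Hxyᵀ) *ᵥ v) := by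
      rw [hLc v, Matrix.neg_mulVec, Matrix.mulVec_neg, Matrix.mulVec_mulVec,
        dotProduct_neg, ← Matrix.mul_assoc]
    have hfinal := hschur.dotProduct_mulVec_pos (x := WithLp.ofLp v) (by simpa using hv)
    simp only [star_trivial] at hfinal
    rw [Matrix.sub_mulVec, dotProduct_sub] at hfinal
    linarith
  obtain ⟨r₂, hr₂, hmin⟩ := my_localMin (fun x => F (Aφ x + cφ)) hφ2 xs hφstat hφQ
  have hφxs : F (Aφ xs + cφ) = f xs ys := by rw [hptφ, hF]
  have hφx : ∀ x, F (Aφ x + cφ) = f x (ys + Lc (x - xs)) := by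
    intro x
    have hpt2 : Aφ x + cφ = (x, ys + Lc (x - xs)) := by
      rw [hcφ, map_sub]
      simp only [Prod.ext_iff, Prod.fst_add, Prod.snd_add, Prod.fst_sub, Prod.snd_sub]
      constructor
      · show x + (xs - xs) = x
        abel
      · show Lc x + (ys - Lc xs) = ys + (Lc x - Lc xs)
        abel
    rw [hpt2, hF]
  -- assemble
  refine ⟨min r₁ r₂, lt_min hr₁ hr₂, fun δ => ‖Lc‖ * δ, ?_, ?_, ?_⟩
  · intro δ hδ
    exact mul_nonneg (norm_nonneg _) hδ.1.le
  · have h0 : Continuous (fun δ : ℝ => ‖Lc‖ * δ) := continuous_const.mul continuous_id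
    have ht : Tendsto (fun δ : ℝ => ‖Lc‖ * δ) (nhds 0) (nhds 0) := by
      have := h0.tendsto (0:ℝ)
      simpa using this
    exact ht.mono_left nhdsWithin_le_nhds
  · intro δ hδ x y hx hy
    constructor
    · exact hmax y (hy.trans (hδ.2.trans (min_le_left _ _)))
    · have h1 : f xs ys ≤ F (Aφ x + cφ) := by
        rw [← hφxs]
        exact hmin x (hx.trans (hδ.2.trans (min_le_right _ _)))
      have hmem : ys + Lc (x - xs) ∈ closedBall ys (‖Lc‖ * δ) := by
        rw [mem_closedBall, dist_eq_norm, add_sub_cancel_left]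
        calc ‖Lc (x - xs)‖ ≤ ‖Lc‖ * ‖x - xs‖ := Lc.le_opNorm _
          _ ≤ ‖Lc‖ * δ := mul_le_mul_of_nonneg_left hx (norm_nonneg _)
      have hcont : Continuous (f x) := by
        have : Continuous (fun y => F (x, y)) :=
          hf.continuous.comp (continuous_const.prodMk continuous_id)
        rw [hF] at this
        exact this
      have hbdd : BddAbove (f x '' closedBall ys (‖Lc‖ * δ)) :=
        ((isCompact_closedBall ys (‖Lc‖ * δ)).image hcont).bddAbove
      calc f xs ys ≤ F (Aφ x + cφ) := h1
        _ = f x (ys + Lc (x - xs)) := hφx x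
        _ ≤ sSup (f x '' closedBall ys (‖Lc‖ * δ)) :=
            le_csSup hbdd ⟨ys + Lc (x - xs), hmem, rfl⟩
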